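/- Let M be a symmetric positive definite symplectic 2n×2n matrix and Ω = {z ∈ ℝ²ⁿ : ⟪Mz,z⟫ ≤ 1}. Let Ω_X and Ω_P be the orthogonal projections of Ω onto ℝⁿ_x × 0 and 0 × ℝⁿ_p. Then (Ω_X)° ⊆ Ω_P, i.e., (Ω_X, Ω_P) is a polar dual pair. -/

import Mathlib

open Matrix

/-- Polar dual of a set in ℝⁿ (with the dot product pairing). -/
def polarDual {n : ℕ} (X : Set (Fin n → ℝ)) : Set (Fin n → ℝ) :=
  {p | ∀ x ∈ X, p ⬝ᵥ x ≤ 1}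

/-- let `M` be a symmetric positive definite symplectic matrix
and `Ω = {z : ⟪Mz,z⟫ ≤ 1}`.  Then the orthogonal projections `Ω_X` and `Ω_P`
of `Ω` on the coordinate Lagrangian planes form a polar dual pair:
`(Ω_X)° ⊆ Ω_P`. -/
theorem projections_of_symplectic_ellipsoid_dual_pair {n : ℕ}
    (M : Matrix (Fin n ⊕ Fin n) (Fin n ⊕ Fin n) ℝ)
    (hM : M.PosDef)
    (hsympl : Mᵀ * (Matrix.fromBlocks 0 1 (-1) 0) * M
        = Matrix.fromBlocks 0 1 (-1) 0) :
    polarDual ((fun z : (Fin n ⊕ Fin n) → ℝ => z ∘ Sum.inl) ''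
        {z | M.mulVec z ⬝ᵥ z ≤ 1})
      ⊆ (fun z : (Fin n ⊕ Fin n) → ℝ => z ∘ Sum.inr) ''
        {z | M.mulVec z ⬝ᵥ z ≤ 1} := by
  intro p hp
  have hsym : Mᵀ = M := hM.isHermitian.eq
  set J : Matrix (Fin n ⊕ Fin n) (Fin n ⊕ Fin n) ℝ := Matrix.fromBlocks 0 1 (-1) 0 with hJ
  have hJt : Jᵀ = -J := by
    simp [hJ, Matrix.fromBlocks_transpose, Matrix.fromBlocks_neg]
  have hJJ : J * J = -1 := by
    simp [hJ, Matrix.fromBlocks_multiply, Matrix.fromBlocks_neg, ← Matrix.fromBlocks_one]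
  have hMJM : M * J * M = J := by rw [hsym] at hsympl; exact hsympl
  set q : (Fin n ⊕ Fin n) → ℝ := Sum.elim (fun _ => 0) p with hq
  have hqr : q ∘ Sum.inr = p := rfl
  set c : ℝ := M.mulVec q ⬝ᵥ q with hc
  refine ⟨q, ?_, hqr⟩
  show c ≤ 1
  have hJq : J.mulVec q = Sum.elim p (fun _ => 0) := by
    rw [hq, hJ]
    ext (i | i) <;>
      simp [Matrix.fromBlocks_mulVec, show (fun _ : Fin n => (0:ℝ)) = 0 from rfl,
        Matrix.one_mulVec]
  have hdot : ∀ w : (Fin n ⊕ Fin n) → ℝ, p ⬝ᵥ (w ∘ Sum.inl) = J.mulVec q ⬝ᵥ w := by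
    intro w
    rw [hJq]
    simp [dotProduct, Fintype.sum_sum_type]
  have hJqJMq : J.mulVec q ⬝ᵥ (J * M).mulVec q = c := by
    rw [show J.mulVec q = q ᵥ* Jᵀ from (Matrix.vecMul_transpose J q).symm,
      Matrix.dotProduct_mulVec, Matrix.vecMul_vecMul, ← Matrix.mul_assoc, hJt,
      Matrix.neg_mul, hJJ, neg_neg, Matrix.one_mul,
      show q ᵥ* M = M.mulVec q by conv_lhs => rw [← hsym, Matrix.vecMul_transpose]]
  have hkey : M.mulVec ((J * M).mulVec q) ⬝ᵥ (J * M).mulVec q = c := by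
    rw [Matrix.mulVec_mulVec, ← Matrix.mul_assoc, hMJM, hJqJMq]
  have hc0 : 0 ≤ c := by
    have h := hM.posSemidef.dotProduct_mulVec_nonneg q
    rw [hc, dotProduct_comm]
    exact_mod_cast h
  rcases eq_or_lt_of_le hc0 with h0 | hpos
  · rw [← h0]; norm_num
  · set t : ℝ := Real.sqrt c with ht
    have ht2 : t ^ 2 = c := Real.sq_sqrt hc0
    have ht0 : 0 < t := Real.sqrt_pos.mpr hpos
    set z : (Fin n ⊕ Fin n) → ℝ := t⁻¹ • (J * M).mulVec q with hz
    have hzmem : M.mulVec z ⬝ᵥ z ≤ 1 := by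
      rw [hz, Matrix.mulVec_smul, smul_dotProduct, dotProduct_smul, hkey, smul_eq_mul,
        smul_eq_mul, ← ht2]
      rw [show t⁻¹ * (t⁻¹ * t ^ 2) = 1 by field_simp [pow_two]]
    have hle := hp (z ∘ Sum.inl) ⟨z, hzmem, rfl⟩
    rw [hdot z, hz, dotProduct_smul, hJqJMq, smul_eq_mul, ← ht2,
      show t⁻¹ * t ^ 2 = t by field_simp [pow_two]] at hle
    nlinarith
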